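/- Assume additionally 1 < c < 2 and: (U(x) − U(x_U⁻))/(x_U − x)^{c−1} → U_0 for some U_0 < 0, and U'(x)·(x_U − x)^{2−c} → (c−1)·|U_0|, both as x → x_U⁻. Define, for w ∈ (w_c, x_V/x_U), θ(w) = w·U(x₁(w))·V'(w·x₁(w)) / ( U'(x₁(w))·V(w·x₁(w)) + w·U(x₁(w))·V'(w·x₁(w)) ). Then there exists a constant A > 0 such that θ(w)/(w − w_c)^{(2−c)/(c−1)} → A as w → w_c from the right; i.e., the fraction of shared bonds vanishes like A·(w − w_c)^{(2−c)/(c−1)} above the transition. -/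

import Mathlib

open Filter Topology Set

lemma aux_summable {a : ℕ → ℝ} (ha : ∀ n, 0 ≤ a n) {x t : ℝ} (hxt : |x| ≤ t)
    (h : Summable fun n => a n * t ^ n) : Summable fun n => a n * x ^ n := by
  refine h.of_norm_bounded (fun n => ?_)
  have h1 : ‖a n * x ^ n‖ = a n * |x| ^ n := by
    simp [abs_mul, abs_pow, abs_of_nonneg (ha n)]
  rw [h1]
  gcongr
  exact ha n


lemma aux_tsum_le {a : ℕ → ℝ} (ha : ∀ n, 0 ≤ a n) {x y : ℝ} (hx : 0 ≤ x) (hxy : x ≤ y)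
    (h : Summable fun n => a n * y ^ n) :
    (∑' n, a n * x ^ n) ≤ ∑' n, a n * y ^ n := by
  refine Summable.tsum_le_tsum (fun n => ?_) (aux_summable ha (by rwa [abs_of_nonneg hx]) h) h
  gcongr
  exact ha n


lemma aux_tsum_lt {a : ℕ → ℝ} (ha : ∀ n, 0 ≤ a n) {M : ℕ} (hM : 1 ≤ M) (haM : 0 < a M)
    {x y : ℝ} (hx : 0 ≤ x) (hxy : x < y)
    (h : Summable fun n => a n * y ^ n) :
    (∑' n, a n * x ^ n) < ∑' n, a n * y ^ n := by
  refine Summable.tsum_lt_tsum (i := M) (fun n => ?_)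
    (by have := pow_lt_pow_left₀ hxy hx (n := M) (by omega); nlinarith)
    (aux_summable ha (by rw [abs_of_nonneg hx]; exact hxy.le) h) h
  gcongr
  exact ha n


lemma aux_le_tsum {a : ℕ → ℝ} (ha : ∀ n, 0 ≤ a n) {x : ℝ} (hx : 0 ≤ x) (M : ℕ)
    (h : Summable fun n => a n * x ^ n) :
    a M * x ^ M ≤ ∑' n, a n * x ^ n :=
  Summable.le_tsum h M (fun j _ => mul_nonneg (ha j) (pow_nonneg hx j))

lemma aux_analyticAt {b : ℕ → ℝ} (hb : ∀ n, 0 ≤ b n) {V : ℝ → ℝ}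
    (hV : ∀ x, V x = ∑' n, b n * x ^ n) {xV ρ : ℝ} (hρ0 : 0 ≤ ρ) (hρ : ρ < xV)
    (hVconv : ∀ x : ℝ, 0 ≤ x → x < xV → Summable fun n => b n * x ^ n) :
    ∀ z : ℝ, |z| < ρ → AnalyticAt ℝ V z ∧ AnalyticAt ℝ (deriv V) z := by
  set t : ℝ := (ρ + xV) / 2 with ht_def
  have htρ : ρ < t := by simp only [ht_def]; linarith
  have ht : t < xV := by simp only [ht_def]; linarith
  have ht0 : 0 < t := lt_of_le_of_lt hρ0 htρ
  have hsum_t : Summable fun n => b n * t ^ n := hVconv t ht0.le ht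
  set P : FormalMultilinearSeries ℝ ℝ ℝ := FormalMultilinearSeries.ofScalars ℝ b with hP
  have hrad : ENNReal.ofReal t ≤ P.radius := by
    have : Summable fun n => ‖P n‖ * ((t.toNNReal : ℝ)) ^ n := by
      simp only [hP, FormalMultilinearSeries.ofScalars_norm, Real.norm_eq_abs,
        Real.coe_toNNReal _ ht0.le]
      exact hsum_t.congr (fun n => by rw [abs_of_nonneg (hb n)])
    have h2 := P.le_radius_of_summable_norm this
    rwa [ENNReal.ofReal]
  have hball : HasFPowerSeriesOnBall V P 0 (ENNReal.ofReal t) := by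
    refine ⟨hrad, ENNReal.ofReal_pos.mpr ht0, ?_⟩
    intro y hy
    have hyt : |y| < t := by
      rw [EMetric.mem_ball, edist_dist, Real.dist_0_eq_abs] at hy
      exact (ENNReal.ofReal_lt_ofReal_iff ht0).mp hy
    have hsy : Summable fun n => b n * y ^ n := aux_summable hb hyt.le hsum_t
    have : V (0 + y) = ∑' n, b n * y ^ n := by rw [zero_add, hV]
    rw [this]
    simpa only [hP, FormalMultilinearSeries.ofScalars_apply_eq, smul_eq_mul]
      using hsy.hasSum
  have hanal : AnalyticOnNhd ℝ V (Metric.eball (0:ℝ) (ENNReal.ofReal t)) :=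
    hball.analyticOnNhd
  have hdanal : AnalyticOnNhd ℝ (deriv V) (Metric.eball (0:ℝ) (ENNReal.ofReal t)) :=
    hanal.deriv
  intro z hz
  have hmem : z ∈ Metric.eball (0:ℝ) (ENNReal.ofReal t) := by
    rw [EMetric.mem_ball, edist_dist, Real.dist_0_eq_abs]
    exact (ENNReal.ofReal_lt_ofReal_iff ht0).mpr (hz.trans htρ)
  exact ⟨hanal z hmem, hdanal z hmem⟩
set_option maxHeartbeats 1000000 in
theorem stmt_19
    (p b : ℕ → ℝ)
    (hp : ∀ n, 0 ≤ p n) (hp0 : p 0 = 0)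
    (hb : ∀ n, 0 ≤ b n) (hb0 : 0 < b 0)
    (hpN : ∃ N, 1 ≤ N ∧ 0 < p N) (hbM : ∃ M, 1 ≤ M ∧ 0 < b M)
    (U V : ℝ → ℝ)
    (hU : ∀ x, U x = ∑' n, p n * x ^ n)
    (hV : ∀ x, V x = ∑' n, b n * x ^ n)
    (xU xV : ℝ) (hxU0 : 0 < xU) (hxUV : xU < xV) (hxV1 : xV ≤ 1)
    (hUconv : ∀ x : ℝ, 0 ≤ x → x < xU → Summable fun n => p n * x ^ n)
    (hUdiv : ∀ x : ℝ, xU < x → ¬ Summable fun n => p n * x ^ n)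
    (hVconv : ∀ x : ℝ, 0 ≤ x → x < xV → Summable fun n => b n * x ^ n)
    (hVdiv : ∀ x : ℝ, xV < x → ¬ Summable fun n => b n * x ^ n)
    (hVinf : Filter.Tendsto V (𝓝[<] xV) Filter.atTop)
    (L : ℝ) (hL : Filter.Tendsto U (𝓝[<] xU) (𝓝 L))
    (hsub : L * V xU < 1)
    (wc : ℝ) (hwc : wc ∈ Set.Ioo 1 (xV / xU)) (hwceq : L * V (wc * xU) = 1)
    (x₁ : ℝ → ℝ)
    (hx₁ : ∀ w ∈ Set.Ioo wc (xV / xU),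
      x₁ w ∈ Set.Ioo 0 xU ∧ U (x₁ w) * V (w * x₁ w) = 1)
    (hx₁uniq : ∀ w ∈ Set.Ioo wc (xV / xU), ∀ x ∈ Set.Ioo 0 xU,
      U x * V (w * x) = 1 → x = x₁ w)
    (c U0 : ℝ) (hc1 : 1 < c) (hc2 : c < 2) (hU0neg : U0 < 0)
    (hU0 : Filter.Tendsto (fun x => (U x - L) / (xU - x) ^ (c - 1))
      (𝓝[<] xU) (𝓝 U0))
    (hU' : Filter.Tendsto (fun x => deriv U x * (xU - x) ^ (2 - c))
      (𝓝[<] xU) (𝓝 ((c - 1) * |U0|))) :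
    ∃ A : ℝ, 0 < A ∧
      Filter.Tendsto
        (fun w => (w * U (x₁ w) * deriv V (w * x₁ w) /
            (deriv U (x₁ w) * V (w * x₁ w) + w * U (x₁ w) * deriv V (w * x₁ w))) /
          (w - wc) ^ ((2 - c) / (c - 1)))
        (𝓝[>] wc) (𝓝 A) := by
  obtain ⟨N, hN1, hpN⟩ := hpN
  obtain ⟨M, hM1, hbM⟩ := hbM
  have hwc1 : 1 < wc := hwc.1
  have hwcpos : (0:ℝ) < wc := by linarith
  have hr0pos : 0 < wc * xU := by positivity
  have hr0xV : wc * xU < xV := by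
    have := hwc.2
    rw [lt_div_iff₀ hxU0] at this
    exact this
  set ρ : ℝ := (wc * xU + xV) / 2 with hρdef
  have hρ1 : wc * xU < ρ := by simp only [hρdef]; linarith
  have hρ2 : ρ < xV := by simp only [hρdef]; linarith
  have hρ0 : (0:ℝ) ≤ ρ := by simp only [hρdef]; nlinarith
  have hanal := aux_analyticAt hb hV hρ0 hρ2 hVconv
  have hr0ρ : |wc * xU| < ρ := by rw [abs_of_pos hr0pos]; exact hρ1
  have hVD : HasDerivAt V (deriv V (wc * xU)) (wc * xU) :=
    ((hanal _ hr0ρ).1.differentiableAt).hasDerivAt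
  have hdVcont : ContinuousAt (deriv V) (wc * xU) := (hanal _ hr0ρ).2.continuousAt
  -- basic V facts
  have hVmono : ∀ a b' : ℝ, 0 ≤ a → a ≤ b' → b' < xV → V a ≤ V b' := by
    intro a b' h1 h2 h3
    rw [hV, hV]
    exact aux_tsum_le hb h1 h2 (hVconv b' (h1.trans h2) h3)
  have hVpos : ∀ x : ℝ, 0 ≤ x → x < xV → 0 < V x := by
    intro x h1 h2
    rw [hV]
    have h3 := aux_le_tsum hb h1 0 (hVconv x h1 h2)
    rw [pow_zero, mul_one] at h3
    linarith
  have hVstrict : ∀ a b' : ℝ, 0 ≤ a → a < b' → b' < xV → V a < V b' := by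
    intro a b' h1 h2 h3
    rw [hV, hV]
    exact aux_tsum_lt hb hM1 hbM h1 h2 (hVconv b' (by linarith) h3)
  -- basic U facts
  have hUmono : ∀ a b' : ℝ, 0 ≤ a → a ≤ b' → b' < xU → U a ≤ U b' := by
    intro a b' h1 h2 h3
    rw [hU, hU]
    exact aux_tsum_le hp h1 h2 (hUconv b' (h1.trans h2) h3)
  have hUpos : ∀ x : ℝ, 0 < x → x < xU → 0 < U x := by
    intro x h1 h2
    rw [hU]
    have h3 := aux_le_tsum hp h1.le N (hUconv x h1.le h2)
    have h4 : 0 < p N * x ^ N := by positivity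
    linarith
  have hUstrict : ∀ a b' : ℝ, 0 ≤ a → a < b' → b' < xU → U a < U b' := by
    intro a b' h1 h2 h3
    rw [hU, hU]
    exact aux_tsum_lt hp hN1 hpN h1 h2 (hUconv b' (by linarith) h3)
  have hUltL : ∀ x : ℝ, 0 ≤ x → x < xU → U x < L := by
    intro x h1 h2
    set m := (x + xU) / 2 with hmdef
    have hm1 : x < m := by simp only [hmdef]; linarith
    have hm2 : m < xU := by simp only [hmdef]; linarith
    have h3 : U x < U m := hUstrict x m h1 hm1 hm2
    have h4 : U m ≤ L := by
      refine ge_of_tendsto hL ?_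
      filter_upwards [Ioo_mem_nhdsLT_of_mem (⟨hm2, le_refl xU⟩ : xU ∈ Set.Ioc m xU)]
        with z hz
      exact hUmono m z (by linarith) hz.1.le hz.2
    linarith
  have hVr0pos : 0 < V (wc * xU) := hVpos _ hr0pos.le hr0xV
  have hLpos : 0 < L := by nlinarith
  have hVr0 : V (wc * xU) = 1 / L := by
    rw [eq_div_iff hLpos.ne']
    linarith [hwceq]
  have hIoo : Set.Ioo wc (xV / xU) ∈ 𝓝[>] wc :=
    Ioo_mem_nhdsGT_of_mem ⟨le_refl wc, hwc.2⟩
  -- x₁ tends to xU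
  have htendx₁ : Tendsto x₁ (𝓝[>] wc) (𝓝 xU) := by
    rw [tendsto_order]
    constructor
    · intro a ha
      rcases le_or_gt a 0 with h | h
      · filter_upwards [hIoo] with w hw
        exact lt_of_le_of_lt h (hx₁ w hw).1.1
      · have hUa : 0 < U a := hUpos a h ha
        have hUaL : U a < L := hUltL a h.le ha
        have hwca : 0 < wc * a := by positivity
        have hwca2 : wc * a < wc * xU := by nlinarith
        have hVwa : V (wc * a) < V (wc * xU) := hVstrict _ _ hwca.le hwca2 hr0xV
        have hVwa0 : 0 < V (wc * a) := hVpos _ hwca.le (by linarith)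
        have hkey : U a * V (wc * a) < 1 := by nlinarith
        have hcont : ContinuousAt (fun w : ℝ => U a * V (w * a)) wc := by
          refine ContinuousAt.mul continuousAt_const ?_
          have h5 : ContinuousAt V (wc * a) :=
            (hanal _ (by rw [abs_of_pos hwca]; linarith)).1.continuousAt
          have h6 : ContinuousAt (fun w : ℝ => w * a) wc :=
            continuousAt_id.mul continuousAt_const
          have h7 := ContinuousAt.comp (g := V) (f := fun w : ℝ => w * a)
            (x := wc) h5 h6
          simpa [Function.comp_def] using h7
        have hev : ∀ᶠ w in 𝓝 wc, U a * V (w * a) < 1 :=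
          hcont.eventually_lt_const hkey
        filter_upwards [hIoo, hev.filter_mono nhdsWithin_le_nhds] with w hw hw2
        by_contra hcon
        push_neg at hcon
        have hwpos : (0:ℝ) < w := by have := hw.1; linarith
        have hx0 : 0 < x₁ w := (hx₁ w hw).1.1
        have hxlt : x₁ w < xU := (hx₁ w hw).1.2
        have hwxV : w * xU < xV := by
          have := hw.2; rw [lt_div_iff₀ hxU0] at this; exact this
        have m1 : U (x₁ w) ≤ U a := hUmono _ _ hx0.le hcon ha
        have m2 : V (w * x₁ w) ≤ V (w * a) := by
          refine hVmono _ _ (by positivity) ?_ ?_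
          · exact mul_le_mul_of_nonneg_left hcon hwpos.le
          · nlinarith
        have m3 : 0 ≤ V (w * x₁ w) := (hVpos _ (by positivity) (by nlinarith)).le
        have m4 : U (x₁ w) * V (w * x₁ w) ≤ U a * V (w * a) :=
          mul_le_mul m1 m2 m3 hUa.le
        have := (hx₁ w hw).2
        linarith
    · intro a ha
      filter_upwards [hIoo] with w hw
      exact lt_trans (hx₁ w hw).1.2 ha
  have htendx₁' : Tendsto x₁ (𝓝[>] wc) (𝓝[<] xU) := by
    rw [tendsto_nhdsWithin_iff]
    refine ⟨htendx₁, ?_⟩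
    filter_upwards [hIoo] with w hw
    exact (hx₁ w hw).1.2
  have htendw : Tendsto (fun w : ℝ => w) (𝓝[>] wc) (𝓝 wc) :=
    tendsto_id.mono_left nhdsWithin_le_nhds
  have htendy : Tendsto (fun w => w * x₁ w) (𝓝[>] wc) (𝓝 (wc * xU)) :=
    htendw.mul htendx₁
  have hVyineq : ∀ᶠ w in 𝓝[>] wc, V (wc * xU) < V (w * x₁ w) := by
    filter_upwards [hIoo] with w hw
    have hwpos : (0:ℝ) < w := by have := hw.1; linarith
    have hx0 : 0 < x₁ w := (hx₁ w hw).1.1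
    have hxlt : x₁ w < xU := (hx₁ w hw).1.2
    have hwxV : w * xU < xV := by
      have := hw.2; rw [lt_div_iff₀ hxU0] at this; exact this
    have h1 : 0 < U (x₁ w) := hUpos _ hx0 hxlt
    have h2 : U (x₁ w) < L := hUltL _ hx0.le hxlt
    have h3 : 0 < V (w * x₁ w) := hVpos _ (by positivity) (by nlinarith)
    have h4 := (hx₁ w hw).2
    nlinarith
  have hyne : ∀ᶠ w in 𝓝[>] wc, w * x₁ w ≠ wc * xU := by
    filter_upwards [hVyineq] with w h hc
    rw [hc] at h
    exact lt_irrefl _ h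
  have htendy' : Tendsto (fun w => w * x₁ w) (𝓝[>] wc) (𝓝[≠] (wc * xU)) :=
    tendsto_nhdsWithin_iff.mpr ⟨htendy, hyne⟩
  have hslope := hasDerivAt_iff_tendsto_slope.mp hVD
  have hq : Tendsto (fun w => (V (w * x₁ w) - V (wc * xU)) / (w * x₁ w - wc * xU))
      (𝓝[>] wc) (𝓝 (deriv V (wc * xU))) := by
    have h1 := hslope.comp htendy'
    refine h1.congr (fun w => ?_)
    simp [Function.comp, slope_def_field]
  -- positivity of D
  have hDpos : 0 < deriv V (wc * xU) := by
    have hsub2 : Set.Ioi (wc * xU) ⊆ {x : ℝ | x ≠ wc * xU} :=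
      fun z hz => ne_of_gt hz
    have hp2 : HasDerivAt (fun z : ℝ => z ^ M) ((M : ℝ) * (wc * xU) ^ (M - 1)) (wc * xU) :=
      hasDerivAt_pow M (wc * xU)
    have hf : Tendsto (fun z => b M * ((z ^ M - (wc * xU) ^ M) / (z - wc * xU)))
        (𝓝[>] (wc * xU)) (𝓝 (b M * ((M : ℝ) * (wc * xU) ^ (M - 1)))) := by
      have h2 := (hasDerivAt_iff_tendsto_slope.mp hp2).mono_left
        (nhdsWithin_mono _ hsub2)
      exact tendsto_const_nhds.mul (h2.congr (fun z => by simp [slope_def_field]))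
    have hg : Tendsto (fun z => (V z - V (wc * xU)) / (z - wc * xU))
        (𝓝[>] (wc * xU)) (𝓝 (deriv V (wc * xU))) := by
      have h2 := hslope.mono_left (nhdsWithin_mono _ hsub2)
      exact h2.congr (fun z => by simp [slope_def_field])
    have hle : ∀ᶠ z in 𝓝[>] (wc * xU),
        b M * ((z ^ M - (wc * xU) ^ M) / (z - wc * xU))
          ≤ (V z - V (wc * xU)) / (z - wc * xU) := by
      filter_upwards [Ioo_mem_nhdsGT_of_mem
        (⟨le_refl _, hr0xV⟩ : wc * xU ∈ Set.Ico (wc * xU) xV)] with z hz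
      have hzr : 0 < z - wc * xU := by linarith [hz.1]
      have hnum : b M * (z ^ M - (wc * xU) ^ M) ≤ V z - V (wc * xU) := by
        have hsz : Summable fun n => b n * z ^ n :=
          hVconv z (by linarith [hz.1]) hz.2
        have hsr : Summable fun n => b n * (wc * xU) ^ n := hVconv _ hr0pos.le hr0xV
        have hdiff : V z - V (wc * xU) = ∑' n, (b n * z ^ n - b n * (wc * xU) ^ n) := by
          rw [hV, hV]
          exact (Summable.tsum_sub hsz hsr).symm
        rw [hdiff]
        have h6 := Summable.le_tsum (hsz.sub hsr) M (fun j _ => sub_nonneg.mpr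
          (mul_le_mul_of_nonneg_left (pow_le_pow_left₀ hr0pos.le hz.1.le j) (hb j)))
        calc b M * (z ^ M - (wc * xU) ^ M)
            = b M * z ^ M - b M * (wc * xU) ^ M := by ring
          _ ≤ _ := h6
      rw [mul_div_assoc', div_le_div_iff_of_pos_right hzr]
      exact hnum
    have hD0 : 0 < b M * ((M : ℝ) * (wc * xU) ^ (M - 1)) := by
      have : (0:ℝ) < (M : ℝ) := by exact_mod_cast (by omega : 0 < M)
      positivity
    exact lt_of_lt_of_le hD0 (le_of_tendsto_of_tendsto hf hg hle)
  -- main limits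
  have hUc : Tendsto (fun w => U (x₁ w)) (𝓝[>] wc) (𝓝 L) := hL.comp htendx₁'
  have hUcpos : ∀ᶠ w in 𝓝[>] wc, 0 < U (x₁ w) := by
    filter_upwards [hIoo] with w hw
    exact hUpos _ (hx₁ w hw).1.1 (hx₁ w hw).1.2
  have hVc : Tendsto (fun w => V (w * x₁ w)) (𝓝[>] wc) (𝓝 (1 / L)) := by
    have h1 : Tendsto (fun w => 1 / U (x₁ w)) (𝓝[>] wc) (𝓝 (1 / L)) :=
      tendsto_const_nhds.div hUc hLpos.ne'
    refine h1.congr' ?_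
    filter_upwards [hIoo, hUcpos] with w hw hpos
    rw [eq_comm, eq_div_iff hpos.ne']
    linarith [(hx₁ w hw).2]
  have hdV : Tendsto (fun w => deriv V (w * x₁ w)) (𝓝[>] wc) (𝓝 (deriv V (wc * xU))) :=
    hdVcont.tendsto.comp htendy
  have hs : Tendsto (fun w => (U (x₁ w) - L) / (xU - x₁ w) ^ (c - 1))
      (𝓝[>] wc) (𝓝 U0) := hU0.comp htendx₁'
  have hud : Tendsto (fun w => deriv U (x₁ w) * (xU - x₁ w) ^ (2 - c))
      (𝓝[>] wc) (𝓝 ((c - 1) * |U0|)) := hU'.comp htendx₁'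
  have hεt : Tendsto (fun w => xU - x₁ w) (𝓝[>] wc) (𝓝 0) := by
    have h1 := (tendsto_const_nhds :
      Tendsto (fun _ : ℝ => xU) (𝓝[>] wc) (𝓝 xU)).sub htendx₁
    simpa using h1
  have hε2c : Tendsto (fun w => (xU - x₁ w) ^ (2 - c)) (𝓝[>] wc) (𝓝 0) := by
    have hcont := Real.continuousAt_rpow_const 0 (2 - c) (Or.inr (by linarith))
    have h1 := hcont.tendsto.comp hεt
    simpa [Function.comp_def, Real.zero_rpow (by intro h; linarith : (2:ℝ) - c ≠ 0)] using h1
  have hεpos : ∀ᶠ w in 𝓝[>] wc, 0 < xU - x₁ w := by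
    filter_upwards [hIoo] with w hw
    linarith [(hx₁ w hw).1.2]
  -- the rate of x₁ towards xU
  set D : ℝ := deriv V (wc * xU) with hDdef
  have hdenomlim : Tendsto (fun w =>
      ((U (x₁ w) - L) / (xU - x₁ w) ^ (c - 1)) * V (w * x₁ w)
        - L * ((V (w * x₁ w) - V (wc * xU)) / (w * x₁ w - wc * xU)) * wc
            * (xU - x₁ w) ^ (2 - c))
      (𝓝[>] wc) (𝓝 (U0 * (1 / L))) := by
    have h1 := hs.mul hVc
    have h2 := (((tendsto_const_nhds (x := L)).mul hq).mul
      (tendsto_const_nhds (x := wc))).mul hε2c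
    have h3 := h1.sub h2
    simpa using h3
  have hULne : U0 * (1 / L) ≠ 0 :=
    mul_ne_zero hU0neg.ne (one_div_ne_zero hLpos.ne')
  have hdenomne : ∀ᶠ w in 𝓝[>] wc,
      ((U (x₁ w) - L) / (xU - x₁ w) ^ (c - 1)) * V (w * x₁ w)
        - L * ((V (w * x₁ w) - V (wc * xU)) / (w * x₁ w - wc * xU)) * wc
            * (xU - x₁ w) ^ (2 - c) ≠ 0 :=
    hdenomlim.eventually_ne hULne
  set R : ℝ := -(L * D * xU) / (U0 * (1 / L)) with hRdef
  have hRpos : 0 < R := by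
    rw [hRdef]
    apply div_pos_of_neg_of_neg
    · nlinarith [mul_pos (mul_pos hLpos hDpos) hxU0]
    · exact mul_neg_of_neg_of_pos hU0neg (by positivity)
  have hG : Tendsto (fun w =>
      -(L * ((V (w * x₁ w) - V (wc * xU)) / (w * x₁ w - wc * xU)) * x₁ w)
        / (((U (x₁ w) - L) / (xU - x₁ w) ^ (c - 1)) * V (w * x₁ w)
            - L * ((V (w * x₁ w) - V (wc * xU)) / (w * x₁ w - wc * xU)) * wc
                * (xU - x₁ w) ^ (2 - c)))
      (𝓝[>] wc) (𝓝 R) := by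
    have h1 := (((tendsto_const_nhds (x := L)).mul hq).mul htendx₁).neg
    exact h1.div hdenomlim hULne
  have hR : Tendsto (fun w => (xU - x₁ w) ^ (c - 1) / (w - wc)) (𝓝[>] wc) (𝓝 R) := by
    refine Tendsto.congr' ?_ hG
    filter_upwards [hIoo, hεpos, hyne, hdenomne, self_mem_nhdsWithin]
      with w hw hε hyn hdn hwmem
    have hwne : w - wc ≠ 0 := sub_ne_zero.mpr (ne_of_gt hwmem)
    have hE1pos : 0 < (xU - x₁ w) ^ (c - 1) := Real.rpow_pos_of_pos hε _
    have hE : (xU - x₁ w) ^ (c - 1) * (xU - x₁ w) ^ (2 - c) = xU - x₁ w := by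
      rw [← Real.rpow_add hε]
      norm_num
    have hSE : (U (x₁ w) - L) / (xU - x₁ w) ^ (c - 1) * (xU - x₁ w) ^ (c - 1)
        = U (x₁ w) - L := div_mul_cancel₀ _ hE1pos.ne'
    have hyne2 : w * x₁ w - wc * xU ≠ 0 := sub_ne_zero.mpr hyn
    have hQE : (V (w * x₁ w) - V (wc * xU)) / (w * x₁ w - wc * xU)
        * (w * x₁ w - wc * xU) = V (w * x₁ w) - 1 / L := by
      rw [div_mul_cancel₀ _ hyne2, hVr0]
    have heq : U (x₁ w) * V (w * x₁ w) = 1 := (hx₁ w hw).2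
    have hL1 : L * (1 / L) = 1 := by field_simp
    rw [div_eq_div_iff hdn hwne]
    linear_combination (-(V (w * x₁ w))) * hSE
      + (-L) * hQE + (-1 : ℝ) * heq + hL1
      + (L * ((V (w * x₁ w) - V (wc * xU)) / (w * x₁ w - wc * xU)) * wc) * hE
  -- power ratio
  have hα : (c - 1) * ((2 - c) / (c - 1)) = 2 - c := by
    have hc0 : c - 1 ≠ 0 := by intro h; linarith
    field_simp
  have hRatio : Tendsto
      (fun w => (xU - x₁ w) ^ (2 - c) / (w - wc) ^ ((2 - c) / (c - 1)))
      (𝓝[>] wc) (𝓝 (R ^ ((2 - c) / (c - 1)))) := by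
    have hcont : ContinuousAt (fun x : ℝ => x ^ ((2 - c) / (c - 1))) R :=
      Real.continuousAt_rpow_const _ _ (Or.inl hRpos.ne')
    have h1 := hcont.tendsto.comp hR
    refine Tendsto.congr' ?_ h1
    filter_upwards [hεpos, self_mem_nhdsWithin] with w hε hwmem
    have hδ : 0 < w - wc := sub_pos.mpr hwmem
    show ((fun x : ℝ => x ^ ((2 - c) / (c - 1))) ∘
        fun w => (xU - x₁ w) ^ (c - 1) / (w - wc)) w
        = (xU - x₁ w) ^ (2 - c) / (w - wc) ^ ((2 - c) / (c - 1))
    simp only [Function.comp_apply]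
    rw [Real.div_rpow (Real.rpow_nonneg hε.le _) hδ.le,
      ← Real.rpow_mul hε.le, hα]
  -- the theta part
  have hNum : Tendsto (fun w => w * U (x₁ w) * deriv V (w * x₁ w))
      (𝓝[>] wc) (𝓝 (wc * L * D)) := (htendw.mul hUc).mul hdV
  have hBpos : 0 < (c - 1) * |U0| := by
    have : 0 < |U0| := abs_pos.mpr hU0neg.ne
    nlinarith
  have hden2lim : Tendsto (fun w =>
      deriv U (x₁ w) * (xU - x₁ w) ^ (2 - c) * V (w * x₁ w)
        + w * U (x₁ w) * deriv V (w * x₁ w) * (xU - x₁ w) ^ (2 - c))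
      (𝓝[>] wc) (𝓝 ((c - 1) * |U0| * (1 / L))) := by
    have h1 := (hud.mul hVc).add (hNum.mul hε2c)
    simpa using h1
  have hden2ne : (c - 1) * |U0| * (1 / L) ≠ 0 := by positivity
  have hθ : Tendsto (fun w =>
      (w * U (x₁ w) * deriv V (w * x₁ w) /
          (deriv U (x₁ w) * V (w * x₁ w) + w * U (x₁ w) * deriv V (w * x₁ w)))
        / (xU - x₁ w) ^ (2 - c))
      (𝓝[>] wc) (𝓝 ((wc * L * D) / ((c - 1) * |U0| * (1 / L)))) := by
    have h1 := hNum.div hden2lim hden2ne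
    refine h1.congr (fun w => ?_)
    simp only [Pi.div_apply]
    rw [div_div]
    congr 1
    ring
  refine ⟨(wc * L * D) / ((c - 1) * |U0| * (1 / L)) * R ^ ((2 - c) / (c - 1)), ?_, ?_⟩
  · have h1 : 0 < (wc * L * D) / ((c - 1) * |U0| * (1 / L)) := by
      apply div_pos (by positivity)
      positivity
    exact mul_pos h1 (Real.rpow_pos_of_pos hRpos _)
  · have hfinal := hθ.mul hRatio
    refine Tendsto.congr' ?_ hfinal
    filter_upwards [hεpos, self_mem_nhdsWithin] with w hε hwmem
    have hE2 : (xU - x₁ w) ^ (2 - c) ≠ 0 := (Real.rpow_pos_of_pos hε _).ne'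
    show (w * U (x₁ w) * deriv V (w * x₁ w) /
          (deriv U (x₁ w) * V (w * x₁ w) + w * U (x₁ w) * deriv V (w * x₁ w)))
          / (xU - x₁ w) ^ (2 - c)
        * ((xU - x₁ w) ^ (2 - c) / (w - wc) ^ ((2 - c) / (c - 1))) = _
    rw [div_mul_div_comm,
      mul_comm (w * U (x₁ w) * deriv V (w * x₁ w) /
        (deriv U (x₁ w) * V (w * x₁ w) + w * U (x₁ w) * deriv V (w * x₁ w)))
        ((xU - x₁ w) ^ (2 - c)),
      mul_div_mul_left _ _ hE2]
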